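/- arXiv:2211.12467 — 2 statements merged into one kernel-verified Lean document; each statement's English description precedes it below -/
import Mathlib

section
/- Let n be a positive integer. If P⁺(n)² does not divide n, then t_n ≥ P⁺(n). -/
/-- `tn n` is the least nonnegative integer `t` such that there is a (possibly empty)
subset `S` of `{n+1, ..., n+t}` with `n * ∏_{m ∈ S} m` a perfect square. -/
noncomputable def tn (n : ℕ) : ℕ :=
  sInf {t : ℕ | ∃ S ⊆ Finset.Icc (n + 1) (n + t), IsSquare (n * ∏ m ∈ S, m)}

/-- `Pplus n` is the largest prime factor of `n`, with `Pplus 1 = 1`. -/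
def Pplus (n : ℕ) : ℕ := WithBot.unbotD 1 n.primeFactors.max

theorem stmt_4 (n : ℕ) (hn : 0 < n) (h : ¬ (Pplus n) ^ 2 ∣ n) :
    Pplus n ≤ tn n := by
  have hn1 : n ≠ 1 := by rintro rfl; exact h (by norm_num [Pplus])
  have h2n : 2 ≤ n := by omega
  have hne : n.primeFactors.Nonempty := Nat.nonempty_primeFactors.mpr h2n
  have hpmem : Pplus n ∈ n.primeFactors := by
    have : (↑(n.primeFactors.max' hne) : WithBot ℕ) = n.primeFactors.max :=
      Finset.coe_max' hne
    have hPp : Pplus n = n.primeFactors.max' hne := by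
      rw [Pplus, ← this]; rfl
    rw [hPp]; exact Finset.max'_mem _ _
  set p := Pplus n with hp
  have hprime : p.Prime := Nat.prime_of_mem_primeFactors hpmem
  have hdvd : p ∣ n := Nat.dvd_of_mem_primeFactors hpmem
  have hfac1 : n.factorization p = 1 := by
    have h1 : 1 ≤ n.factorization p :=
      (Nat.Prime.pow_dvd_iff_le_factorization hprime hn.ne').mp (by simpa using hdvd)
    have h2 : ¬ 2 ≤ n.factorization p := fun hh =>
      h ((Nat.Prime.pow_dvd_iff_le_factorization hprime hn.ne').mpr hh)
    omega
  rw [tn]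
  apply le_csInf
  · refine ⟨3 * n, {4 * n}, ?_, 2 * n, ?_⟩
    · intro x hx
      simp only [Finset.mem_singleton] at hx
      subst hx
      simp only [Finset.mem_Icc]
      omega
    · simp; ring
  · rintro t ⟨S, hS, sq⟩
    by_contra hlt
    push_neg at hlt
    have hmem : ∀ m ∈ S, n + 1 ≤ m ∧ m ≤ n + t := by
      intro m hm
      have := hS hm
      simpa [Finset.mem_Icc] using this
    have hnd : ∀ m ∈ S, ¬ p ∣ m := by
      intro m hm hpm
      obtain ⟨h1, h2⟩ := hmem m hm
      have hd : p ∣ m - n := (Nat.dvd_sub hpm hdvd)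
      have hpos : 0 < m - n := by omega
      have := Nat.le_of_dvd hpos hd
      omega
    have hprod0 : (∏ m ∈ S, m) ≠ 0 := by
      rw [Finset.prod_ne_zero_iff]
      intro m hm
      have := (hmem m hm).1
      omega
    have hfac : (n * ∏ m ∈ S, m).factorization p = 1 := by
      rw [Nat.factorization_mul hn.ne' hprod0]
      have : (∏ m ∈ S, m).factorization p = 0 := by
        rw [Nat.factorization_prod (fun m hm => by have := (hmem m hm).1; omega)]
        rw [Finsupp.finset_sum_apply]
        apply Finset.sum_eq_zero
        intro m hm
        exact Nat.factorization_eq_zero_of_not_dvd (hnd m hm)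
      simp [this, hfac1]
    have heven : Even ((n * ∏ m ∈ S, m).factorization p) := by
      obtain ⟨r, hr⟩ := sq
      have hr0 : r ≠ 0 := by
        rintro rfl
        simp at hr
        omega
      rw [hr, Nat.factorization_mul hr0 hr0]
      exact ⟨r.factorization p, rfl⟩
    rw [hfac] at heven
    exact (Nat.not_even_one) heven
end

section
/- There exist a constant C > 0 and x₀ such that for all real x ≥ x₀, the number of positive integers n ≤ x with P⁺(n)² dividing n is at most C·x·exp(−√(log x)). -/
open Finset Real

lemma harm (L : ℕ) : ∑ k ∈ Finset.Icc 1 L, (1:ℝ)/k ≤ 1 + Real.log L := by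
  induction L with
  | zero => simp
  | succ L ih =>
    rw [Finset.sum_Icc_succ_top (by omega)]
    rcases Nat.eq_zero_or_pos L with hL | hL
    · subst hL; simp
    have h1 : Real.log L + 1/(L+1) ≤ Real.log (L+1) := by
      have hlog : Real.log ((L:ℝ)/(L+1)) ≤ (L:ℝ)/(L+1) - 1 := by
        apply Real.log_le_sub_one_of_pos
        positivity
      have hLpos : (0:ℝ) < L := by exact_mod_cast hL
      rw [Real.log_div (by positivity) (by positivity)] at hlog
      have : (L:ℝ)/(L+1) - 1 = -(1/(L+1)) := by field_simp; ring
      rw [this] at hlog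
      linarith
    push_cast
    linarith

lemma theta (m : ℕ) : ∑ p ∈ (m+1).primesBelow, Real.log p ≤ m * Real.log 4 := by
  have h1 : Real.log (primorial m) ≤ Real.log (4 ^ m) := by
    apply Real.log_le_log (by exact_mod_cast (primorial_pos m))
    exact_mod_cast primorial_le_4_pow m
  rw [Real.log_pow] at h1
  have h2 : Real.log (primorial m) = ∑ p ∈ (m+1).primesBelow, Real.log p := by
    rw [primorial, Nat.primesBelow]
    push_cast
    rw [Real.log_prod]
    intro p hp
    have := (Finset.mem_filter.mp hp).2
    exact_mod_cast this.pos.ne'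
  rw [h2] at h1
  exact_mod_cast h1

lemma block (k : ℕ) (hk : 1 ≤ k) :
    ∑ p ∈ (Finset.Ioc (2^k) (2^(k+1))).filter Nat.Prime, (1:ℝ)/p ≤ 4 / k := by
  set B := (Finset.Ioc (2^k) (2^(k+1))).filter Nat.Prime with hB
  have hlog2 : (0:ℝ) < Real.log 2 := Real.log_pos (by norm_num)
  have hcard : (B.card : ℝ) ≤ 2^(k+2) / k := by
    have h1 : (B.card : ℝ) * (k * Real.log 2) ≤ ∑ p ∈ B, Real.log p := by
      have := Finset.card_nsmul_le_sum B (fun p => Real.log p) (k * Real.log 2) ?_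
      · simpa [nsmul_eq_mul] using this
      · intro p hp
        rw [hB, Finset.mem_filter, Finset.mem_Ioc] at hp
        calc (k:ℝ) * Real.log 2 = Real.log (2^k) := by rw [Real.log_pow]
        _ ≤ Real.log p := by
            apply Real.log_le_log (by positivity)
            exact_mod_cast (hp.1.1.le)
    have h2 : ∑ p ∈ B, Real.log p ≤ Finset.sum ((2^(k+1)+1).primesBelow) (fun (p:ℕ) => Real.log (p:ℝ)) := by
      apply Finset.sum_le_sum_of_subset_of_nonneg
      · intro p hp
        rw [hB, Finset.mem_filter, Finset.mem_Ioc] at hp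
        rw [Nat.mem_primesBelow]
        exact ⟨by omega, hp.2⟩
      · intro p hp _
        apply Real.log_natCast_nonneg
    have h3 := theta (2^(k+1))
    have h4 : (2^(k+1) : ℝ) * Real.log 4 = 2^(k+2) * Real.log 2 := by
      have : (4:ℝ) = 2^2 := by norm_num
      rw [this, Real.log_pow]
      push_cast
      ring
    have h5 : (B.card : ℝ) * (k * Real.log 2) ≤ 2^(k+2) * Real.log 2 := by
      calc (B.card : ℝ) * (k * Real.log 2) ≤ ∑ p ∈ B, Real.log p := h1
      _ ≤ Finset.sum ((2^(k+1)+1).primesBelow) (fun (p:ℕ) => Real.log (p:ℝ)) := h2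
      _ ≤ (2^(k+1) : ℝ) * Real.log 4 := by exact_mod_cast h3
      _ = 2^(k+2) * Real.log 2 := h4
    have hkpos : (0:ℝ) < k := by exact_mod_cast hk
    rw [le_div_iff₀ hkpos]
    nlinarith
  have hsum : ∑ p ∈ B, (1:ℝ)/p ≤ (B.card : ℝ) * (1/2^k) := by
    have := Finset.sum_le_card_nsmul B (fun p => (1:ℝ)/p) (1/2^k) ?_
    · simpa [nsmul_eq_mul] using this
    · intro p hp
      rw [hB, Finset.mem_filter, Finset.mem_Ioc] at hp
      apply div_le_div_of_nonneg_left (by norm_num) (by positivity)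
      exact_mod_cast hp.1.1.le
  have hkpos : (0:ℝ) < k := by exact_mod_cast hk
  calc ∑ p ∈ B, (1:ℝ)/p ≤ (B.card : ℝ) * (1/2^k) := hsum
  _ ≤ (2^(k+2)/k) * (1/2^k) := by
      apply mul_le_mul_of_nonneg_right hcard (by positivity)
  _ = 4 / k := by
      rw [pow_add]
      field_simp
      ring

lemma mertens (M : ℕ) (hM : 2 ≤ M) :
    ∑ p ∈ (M+1).primesBelow, (1:ℝ)/p ≤ 9 + 4 * Real.log (Real.log M) := by
  set L := Nat.log 2 M with hLdef
  have hL1 : 1 ≤ L := by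
    rw [hLdef]
    rw [Nat.le_log_iff_pow_le (by norm_num) (by omega)]
    simpa using hM
  have h2mem : 2 ∈ (M+1).primesBelow := by
    rw [Nat.mem_primesBelow]
    exact ⟨by omega, Nat.prime_two⟩
  have hsplit : ∑ p ∈ (M+1).primesBelow, (1:ℝ)/p
      = 1/2 + ∑ p ∈ (M+1).primesBelow.erase 2, (1:ℝ)/p := by
    rw [← Finset.add_sum_erase _ _ h2mem]
    norm_num
  have hsub : (M+1).primesBelow.erase 2 ⊆
      (Finset.Icc 1 L).biUnion (fun k => (Finset.Ioc (2^k) (2^(k+1))).filter Nat.Prime) := by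
    intro p hp
    rw [Finset.mem_erase, Nat.mem_primesBelow] at hp
    obtain ⟨hne, hplt, hpp⟩ := hp
    have hp3 : 3 ≤ p := by
      have := hpp.two_le; omega
    rw [Finset.mem_biUnion]
    refine ⟨Nat.log 2 (p-1), ?_, ?_⟩
    · rw [Finset.mem_Icc]
      constructor
      · rw [Nat.le_log_iff_pow_le (by norm_num) (by omega)]
        omega
      · exact Nat.log_mono_right (by omega)
    · rw [Finset.mem_filter, Finset.mem_Ioc]
      have h1 : 2 ^ Nat.log 2 (p-1) ≤ p - 1 := Nat.pow_log_le_self 2 (by omega)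
      have h2 : p - 1 < 2 ^ (Nat.log 2 (p-1) + 1) := Nat.lt_pow_succ_log_self (by norm_num) _
      exact ⟨⟨by omega, by omega⟩, hpp⟩
  have hdisj : (↑(Finset.Icc 1 L) : Set ℕ).PairwiseDisjoint
      (fun k => (Finset.Ioc (2^k) (2^(k+1))).filter Nat.Prime) := by
    intro k _ k' _ hne
    simp only [Function.onFun]
    rw [Finset.disjoint_left]
    intro x hx hx'
    rw [Finset.mem_filter, Finset.mem_Ioc] at hx hx'
    rcases lt_or_gt_of_ne hne with h | h
    · have : 2^(k+1) ≤ 2^k' := Nat.pow_le_pow_right (by norm_num) (by omega)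
      omega
    · have : 2^(k'+1) ≤ 2^k := Nat.pow_le_pow_right (by norm_num) (by omega)
      omega
  have hstep : ∑ p ∈ (M+1).primesBelow.erase 2, (1:ℝ)/p ≤ 4 * (1 + Real.log L) := by
    calc ∑ p ∈ (M+1).primesBelow.erase 2, (1:ℝ)/p
        ≤ ∑ p ∈ (Finset.Icc 1 L).biUnion
            (fun k => (Finset.Ioc (2^k) (2^(k+1))).filter Nat.Prime), (1:ℝ)/p := by
          apply Finset.sum_le_sum_of_subset_of_nonneg hsub
          intro p _ _; positivity
      _ = ∑ k ∈ Finset.Icc 1 L, ∑ p ∈ (Finset.Ioc (2^k) (2^(k+1))).filter Nat.Prime, (1:ℝ)/p :=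
          Finset.sum_biUnion hdisj
      _ ≤ ∑ k ∈ Finset.Icc 1 L, 4 / (k:ℝ) := by
          apply Finset.sum_le_sum
          intro k hk
          exact block k (Finset.mem_Icc.mp hk).1
      _ = 4 * ∑ k ∈ Finset.Icc 1 L, (1:ℝ)/k := by
          rw [Finset.mul_sum]
          apply Finset.sum_congr rfl
          intro k _; ring
      _ ≤ 4 * (1 + Real.log L) := by
          have := harm L
          linarith
  have hlogM : Real.log 2 ≤ Real.log M := Real.log_le_log (by norm_num) (by exact_mod_cast hM)
  have hlog2 : (0:ℝ) < Real.log 2 := Real.log_pos (by norm_num)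
  have hLle : (L:ℝ) ≤ 2 * Real.log M := by
    have hpow : (2:ℝ)^L ≤ M := by exact_mod_cast Nat.pow_log_le_self 2 (by omega)
    have := Real.log_le_log (by positivity) hpow
    rw [Real.log_pow] at this
    have hl2 : (1:ℝ)/2 ≤ Real.log 2 := by
      have := Real.log_two_gt_d9; linarith
    nlinarith [Real.log_nonneg (by exact_mod_cast (by omega : 1 ≤ M) : (1:ℝ) ≤ (M:ℝ))]
  have hlogL : Real.log L ≤ Real.log (2 * Real.log M) := by
    apply Real.log_le_log (by exact_mod_cast hL1) hLle
  have hfin : Real.log (2 * Real.log M) = Real.log 2 + Real.log (Real.log M) := by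
    rw [Real.log_mul (by norm_num) (by linarith)]
  rw [hsplit]
  have hl2u : Real.log 2 ≤ 1 := by
    have := Real.log_two_lt_d9; linarith
  linarith

lemma inv_one_sub_le {t : ℝ} (h0 : 0 ≤ t) (h1 : t ≤ 3/4) : (1-t)⁻¹ ≤ Real.exp (4*t) := by
  have he : 1 + 4*t ≤ Real.exp (4*t) := by
    have := Real.add_one_le_exp (4*t); linarith
  have hpos : 0 < 1 - t := by linarith
  have key : (1-t)⁻¹ ≤ 1 + 4*t := by
    rw [← one_div, div_le_iff₀ hpos]
    nlinarith
  linarith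

noncomputable def fσ (σ : ℝ) : ℕ →* ℝ where
  toFun := fun n => (n:ℝ) ^ (-σ)
  map_one' := by simp
  map_mul' := by
    intro m n
    push_cast
    rw [Real.mul_rpow (Nat.cast_nonneg m) (Nat.cast_nonneg n)]

lemma rankin (x : ℝ) (N Y : ℕ) (σ : ℝ) (hσ0 : 0 < σ) (hN : (N:ℝ) ≤ x) :
    (((Finset.Icc 1 N).filter (· ∈ Nat.smoothNumbers (Y+1))).card : ℝ)
      ≤ x ^ σ * ∏ p ∈ (Y+1).primesBelow, (1 - (p:ℝ)^(-σ))⁻¹ := by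
  set F := (Finset.Icc 1 N).filter (· ∈ Nat.smoothNumbers (Y+1)) with hF
  have hlt : ∀ {p : ℕ}, p.Prime → ‖fσ σ p‖ < 1 := by
    intro p hp
    have h1 : (1:ℝ) < p := by exact_mod_cast hp.one_lt
    have : (p:ℝ) ^ (-σ) < 1 := Real.rpow_lt_one_of_one_lt_of_neg h1 (by linarith)
    have h0 : (0:ℝ) ≤ (p:ℝ)^(-σ) := by positivity
    show |(p:ℝ)^(-σ)| < 1
    rw [abs_of_nonneg h0]
    exact this
  obtain ⟨hsummable, hhs⟩ :=
    EulerProduct.summable_and_hasSum_smoothNumbers_prod_primesBelow_geometric hlt (Y+1)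
  have hfσ : ∀ p, fσ σ p = (p:ℝ)^(-σ) := fun p => rfl
  have hxpos : 0 ≤ x := le_trans (by positivity) hN
  -- Step 1: card ≤ sum of (x/n)^σ
  have step1 : (F.card : ℝ) ≤ ∑ n ∈ F, (x / n) ^ σ := by
    rw [Finset.card_eq_sum_ones]
    push_cast
    apply Finset.sum_le_sum
    intro n hn
    rw [hF, Finset.mem_filter, Finset.mem_Icc] at hn
    have hn1 : (1:ℝ) ≤ n := by exact_mod_cast hn.1.1
    have hnx : (n:ℝ) ≤ x := le_trans (by exact_mod_cast hn.1.2) hN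
    apply Real.one_le_rpow _ hσ0.le
    rw [le_div_iff₀ (by linarith)]
    linarith
  -- Step 2: rewrite as x^σ * f n
  have step2 : ∀ n ∈ F, (x / n) ^ σ = x ^ σ * fσ σ n := by
    intro n hn
    rw [hF, Finset.mem_filter, Finset.mem_Icc] at hn
    have hn1 : (1:ℝ) ≤ n := by exact_mod_cast hn.1.1
    rw [hfσ, Real.div_rpow hxpos (by positivity), Real.rpow_neg (by positivity),
      div_eq_mul_inv]
  -- Step 3: sum of f over F ≤ tsum over smooth numbers
  have hsm : ∀ n ∈ F, n ∈ Nat.smoothNumbers (Y+1) := by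
    intro n hn
    exact (Finset.mem_filter.mp hn).2
  have step3 : ∑ n ∈ F, fσ σ n ≤ ∑' m : (Nat.smoothNumbers (Y+1)), fσ σ m := by
    have hsummable' : Summable (fun m : (Nat.smoothNumbers (Y+1)) => fσ σ m) := hhs.summable
    set s : Finset (Nat.smoothNumbers (Y+1)) :=
      F.attach.image (fun n => (⟨n.1, hsm n.1 n.2⟩ : Nat.smoothNumbers (Y+1))) with hs
    have hsum_eq : ∑ m ∈ s, fσ σ m.1 = ∑ n ∈ F, fσ σ n := by
      rw [hs, Finset.sum_image]
      · rw [Finset.sum_attach]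
      · intro a _ b _ hab
        exact Subtype.ext (by simpa using hab)
    rw [← hsum_eq]
    apply Summable.sum_le_tsum s _ hsummable'
    intro m _
    have : (0:ℝ) ≤ (m.1:ℝ)^(-σ) := by positivity
    exact this
  have htsum : ∑' m : (Nat.smoothNumbers (Y+1)), fσ σ m
      = ∏ p ∈ (Y+1).primesBelow, (1 - (p:ℝ)^(-σ))⁻¹ := by
    rw [hhs.tsum_eq]
    rfl
  calc (F.card : ℝ) ≤ ∑ n ∈ F, (x / n) ^ σ := step1
    _ = ∑ n ∈ F, x ^ σ * fσ σ n := Finset.sum_congr rfl step2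
    _ = x ^ σ * ∑ n ∈ F, fσ σ n := by rw [Finset.mul_sum]
    _ ≤ x ^ σ * ∑' m : (Nat.smoothNumbers (Y+1)), fσ σ m := by
        apply mul_le_mul_of_nonneg_left step3 (by positivity)
    _ = x ^ σ * ∏ p ∈ (Y+1).primesBelow, (1 - (p:ℝ)^(-σ))⁻¹ := by rw [htsum]

lemma Pplus_mem {n : ℕ} (hn : 2 ≤ n) : Pplus n ∈ n.primeFactors := by
  have hne : n.primeFactors.Nonempty := Nat.nonempty_primeFactors.mpr (by omega)
  have h1 : (↑(n.primeFactors.max' hne) : WithBot ℕ) = n.primeFactors.max :=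
    Finset.coe_max' hne
  have h2 : Pplus n = n.primeFactors.max' hne := by
    rw [Pplus, ← h1]
    rfl
  rw [h2]
  exact Finset.max'_mem _ _

lemma le_Pplus {n q : ℕ} (hq : q ∈ n.primeFactors) : q ≤ Pplus n := by
  have hn : 2 ≤ n := by
    by_contra h
    interval_cases n <;> simp_all
  have hne : n.primeFactors.Nonempty := Nat.nonempty_primeFactors.mpr (by omega)
  have h1 : (↑(n.primeFactors.max' hne) : WithBot ℕ) = n.primeFactors.max :=
    Finset.coe_max' hne
  have h2 : Pplus n = n.primeFactors.max' hne := by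
    rw [Pplus, ← h1]
    rfl
  rw [h2]
  exact Finset.le_max' _ _ hq

lemma rpow_neg_le34 (p : ℕ) (hp : 2 ≤ p) {σ : ℝ} (hσ : 1/2 ≤ σ) : (p:ℝ)^(-σ) ≤ 3/4 := by
  have hp2 : (2:ℝ) ≤ p := by exact_mod_cast hp
  have h1 : (2:ℝ)^(1/2:ℝ) ≤ (2:ℝ)^σ := Real.rpow_le_rpow_of_exponent_le (by norm_num) hσ
  have h2 : (2:ℝ)^σ ≤ (p:ℝ)^σ := Real.rpow_le_rpow (by norm_num) hp2 (by linarith)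
  have h3 : (4/3:ℝ) ≤ (2:ℝ)^(1/2:ℝ) := by
    rw [← Real.sqrt_eq_rpow]
    nlinarith [Real.sq_sqrt (by norm_num : (0:ℝ) ≤ 2), Real.sqrt_nonneg 2]
  have h4 : (4/3:ℝ) ≤ (p:ℝ)^σ := by linarith
  rw [Real.rpow_neg (by positivity), inv_le_comm₀ (by linarith) (by norm_num)]
  norm_num
  linarith

lemma prod_le_exp (Y : ℕ) (σ : ℝ) (hσ : 1/2 ≤ σ) :
    ∏ p ∈ (Y+1).primesBelow, (1 - (p:ℝ)^(-σ))⁻¹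
      ≤ Real.exp (4 * ∑ p ∈ (Y+1).primesBelow, (p:ℝ)^(-σ)) := by
  rw [Finset.mul_sum, Real.exp_sum]
  apply Finset.prod_le_prod
  · intro p hp
    have h34 := rpow_neg_le34 p (Nat.prime_of_mem_primesBelow hp).two_le hσ
    have h0 : (0:ℝ) < 1 - (p:ℝ)^(-σ) := by linarith
    positivity
  · intro p hp
    exact inv_one_sub_le (by positivity)
      (rpow_neg_le34 p (Nat.prime_of_mem_primesBelow hp).two_le hσ)


set_option maxHeartbeats 1000000 in
theorem stmt_5 :
    ∃ C > (0 : ℝ), ∃ x₀ : ℝ, ∀ x : ℝ, x₀ ≤ x →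
      (({n : ℕ | 0 < n ∧ (n : ℝ) ≤ x ∧ (Pplus n) ^ 2 ∣ n}.ncard : ℝ))
        ≤ C * x * Real.exp (-Real.sqrt (Real.log x)) := by
  refine ⟨3, by norm_num, Real.exp ((10:ℝ)^12), fun x hx => ?_⟩
  have hx1 : (1:ℝ) < x := by
    refine lt_of_lt_of_le ?_ hx
    rw [show (1:ℝ) = Real.exp 0 from (Real.exp_zero).symm]
    exact Real.exp_lt_exp.mpr (by positivity)
  have hxpos : (0:ℝ) < x := by linarith
  have hlx : (10:ℝ)^12 ≤ Real.log x := by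
    rw [← Real.log_exp ((10:ℝ)^12)]
    exact Real.log_le_log (Real.exp_pos _) hx
  set t := Real.sqrt (Real.log x) with htdef
  have hlogx0 : (0:ℝ) ≤ Real.log x := by positivity
  have ht2 : t^2 = Real.log x := Real.sq_sqrt hlogx0
  have ht : (10:ℝ)^6 ≤ t := by
    have h1 : (10:ℝ)^6 = Real.sqrt ((10:ℝ)^12) := by
      rw [show ((10:ℝ)^12)=((10:ℝ)^6)^2 by norm_num, Real.sqrt_sq (by positivity)]
    rw [h1, htdef]
    exact Real.sqrt_le_sqrt hlx
  have ht0 : (0:ℝ) < t := by norm_num at ht ⊢; linarith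
  set N := ⌊x⌋₊ with hNdef
  set Y := ⌊Real.exp t⌋₊ with hYdef
  have hNx : (N:ℝ) ≤ x := Nat.floor_le hxpos.le
  have hYet : (Y:ℝ) ≤ Real.exp t := Nat.floor_le (Real.exp_pos _).le
  have hY2 : 2 ≤ Y := by
    apply Nat.le_floor
    have := Real.add_one_le_exp t
    push_cast
    linarith
  have hYlow : Real.exp t ≤ 2 * (Y:ℝ) := by
    have h1 : Real.exp t < (Y:ℝ) + 1 := Nat.lt_floor_add_one _
    have h2 : (1:ℝ) ≤ (Y:ℝ) := by exact_mod_cast (by omega : 1 ≤ Y)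
    linarith
  set σ := 1 - 2/t with hσdef
  have h2t : 2/t ≤ 1/2 := by
    rw [div_le_div_iff₀ ht0 (by norm_num)]
    linarith
  have hσhalf : 1/2 ≤ σ := by rw [hσdef]; linarith
  have hσ0 : 0 < σ := by rw [hσdef]; linarith
  -- step A : set to finset
  have hset : {n : ℕ | 0 < n ∧ (n : ℝ) ≤ x ∧ (Pplus n) ^ 2 ∣ n}
      = ↑((Finset.Icc 1 N).filter (fun n => Pplus n ^ 2 ∣ n)) := by
    ext n
    simp only [Set.mem_setOf_eq, Finset.coe_filter, Finset.mem_Icc]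
    constructor
    · rintro ⟨h1, h2, h3⟩
      exact ⟨⟨h1, Nat.le_floor h2⟩, h3⟩
    · rintro ⟨⟨h1, h2⟩, h3⟩
      refine ⟨h1, ?_, h3⟩
      calc (n:ℝ) ≤ N := by exact_mod_cast h2
      _ ≤ x := hNx
  rw [hset, Set.ncard_coe_finset]
  set F := (Finset.Icc 1 N).filter (fun n => Pplus n ^ 2 ∣ n) with hF
  set F₁ := (Finset.Icc 1 N).filter (· ∈ Nat.smoothNumbers (Y+1)) with hF₁
  set F₂ := (Finset.Ioc Y N).biUnion
      (fun m => (Finset.Ioc 0 N).filter (fun n => m^2 ∣ n)) with hF₂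
  -- step B : split
  have hsub : F ⊆ F₁ ∪ F₂ := by
    intro n hn
    rw [hF, Finset.mem_filter, Finset.mem_Icc] at hn
    obtain ⟨⟨hn1, hnN⟩, hdvd⟩ := hn
    rw [Finset.mem_union]
    rcases le_or_gt (Pplus n) Y with hcase | hcase
    · left
      rw [hF₁, Finset.mem_filter, Finset.mem_Icc]
      refine ⟨⟨hn1, hnN⟩, ?_⟩
      rw [Nat.mem_smoothNumbers']
      intro p hp hpdvd
      have hpmem : p ∈ n.primeFactors := Nat.mem_primeFactors.mpr ⟨hp, hpdvd, by omega⟩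
      have := le_Pplus hpmem
      omega
    · right
      have hn2 : 2 ≤ n := by
        by_contra h
        have hn1' : n = 1 := by omega
        rw [hn1'] at hcase
        have : Pplus 1 = 1 := by simp [Pplus]
        omega
      have hpmem := Pplus_mem hn2
      have hpdvd : Pplus n ∣ n := Nat.dvd_of_mem_primeFactors hpmem
      have hpN : Pplus n ≤ N := le_trans (Nat.le_of_dvd (by omega) hpdvd) hnN
      rw [hF₂, Finset.mem_biUnion]
      exact ⟨Pplus n, Finset.mem_Ioc.mpr ⟨hcase, hpN⟩,
        Finset.mem_filter.mpr ⟨Finset.mem_Ioc.mpr ⟨by omega, hnN⟩, hdvd⟩⟩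
  have hcardsplit : (F.card : ℝ) ≤ (F₁.card : ℝ) + (F₂.card : ℝ) := by
    have h1 := Finset.card_le_card hsub
    have h2 := Finset.card_union_le F₁ F₂
    exact_mod_cast le_trans h1 h2
  -- step C : bound F₂
  have hYinv : ((Y:ℝ))⁻¹ ≤ 2 * Real.exp (-t) := by
    have hYpos : (0:ℝ) < (Y:ℝ) := by exact_mod_cast (by omega : 0 < Y)
    rw [Real.exp_neg]
    calc ((Y:ℝ))⁻¹ ≤ (Real.exp t / 2)⁻¹ := by
          apply inv_anti₀ (by positivity)
          linarith
    _ = 2 * (Real.exp t)⁻¹ := by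
          rw [inv_div]
          ring
  have hF₂bound : (F₂.card : ℝ) ≤ 2 * x * Real.exp (-t) := by
    have h1 : (F₂.card : ℝ) ≤ ∑ m ∈ Finset.Ioc Y N, ((N / m^2 : ℕ) : ℝ) := by
      have := Finset.card_biUnion_le (s := Finset.Ioc Y N)
        (t := fun m => (Finset.Ioc 0 N).filter (fun n => m^2 ∣ n))
      rw [hF₂]
      calc ((((Finset.Ioc Y N).biUnion
          (fun m => (Finset.Ioc 0 N).filter (fun n => m^2 ∣ n))).card : ℕ) : ℝ)
          ≤ ((∑ m ∈ Finset.Ioc Y N,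
            ((Finset.Ioc 0 N).filter (fun n => m^2 ∣ n)).card : ℕ) : ℝ) := by
            exact_mod_cast this
        _ = ∑ m ∈ Finset.Ioc Y N, ((N / m^2 : ℕ) : ℝ) := by
            push_cast
            apply Finset.sum_congr rfl
            intro m _
            congr 1
            exact_mod_cast Nat.Ioc_filter_dvd_card_eq_div N (m^2)
    have h2 : ∑ m ∈ Finset.Ioc Y N, ((N / m^2 : ℕ) : ℝ)
        ≤ ∑ m ∈ Finset.Ioc Y N, x * (((m:ℝ))^2)⁻¹ := by
      apply Finset.sum_le_sum
      intro m hm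
      rw [Finset.mem_Ioc] at hm
      have hm0 : (0:ℝ) < (m:ℝ) := by exact_mod_cast (by omega : 0 < m)
      calc ((N / m^2 : ℕ) : ℝ) ≤ (N:ℝ) / ((m:ℝ)^2) := by
            rw [div_eq_mul_inv]
            rw [← Nat.cast_pow]
            exact_mod_cast Nat.cast_div_le.trans (by rw [Nat.cast_pow]; rw [div_eq_mul_inv])
        _ ≤ x * (((m:ℝ))^2)⁻¹ := by
            rw [div_eq_mul_inv]
            apply mul_le_mul_of_nonneg_right hNx (by positivity)
    have h3 : ∑ m ∈ Finset.Ioc Y N, (((m:ℝ))^2)⁻¹ ≤ ((Y:ℝ))⁻¹ := by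
      rcases le_or_gt Y N with hYN | hYN
      · calc ∑ m ∈ Finset.Ioc Y N, (((m:ℝ))^2)⁻¹ ≤ (Y:ℝ)⁻¹ - (N:ℝ)⁻¹ :=
            sum_Ioc_inv_sq_le_sub (by omega) hYN
        _ ≤ (Y:ℝ)⁻¹ := by
            have : (0:ℝ) ≤ (N:ℝ)⁻¹ := by positivity
            linarith
      · rw [Finset.Ioc_eq_empty (by omega)]
        simp
    calc (F₂.card : ℝ) ≤ ∑ m ∈ Finset.Ioc Y N, x * (((m:ℝ))^2)⁻¹ := le_trans h1 h2
      _ = x * ∑ m ∈ Finset.Ioc Y N, (((m:ℝ))^2)⁻¹ := by rw [Finset.mul_sum]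
      _ ≤ x * ((Y:ℝ))⁻¹ := by apply mul_le_mul_of_nonneg_left h3 hxpos.le
      _ ≤ x * (2 * Real.exp (-t)) := by apply mul_le_mul_of_nonneg_left hYinv hxpos.le
      _ = 2 * x * Real.exp (-t) := by ring
  -- step D : bound F₁
  have hF₁bound : (F₁.card : ℝ) ≤ x * Real.exp (-t) := by
    have hrankin := rankin x N Y σ hσ0 hNx
    have hprod := prod_le_exp Y σ hσhalf
    have hterm : ∀ p ∈ (Y+1).primesBelow, (p:ℝ)^(-σ) ≤ 8 * (1/(p:ℝ)) := by
      intro p hp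
      have hpp := Nat.prime_of_mem_primesBelow hp
      have hplt := Nat.lt_of_mem_primesBelow hp
      have hp2 : (2:ℝ) ≤ (p:ℝ) := by exact_mod_cast hpp.two_le
      have hp0 : (0:ℝ) < (p:ℝ) := by linarith
      have hsplit : (p:ℝ)^(-σ) = (p:ℝ)^(-(1:ℝ)) * (p:ℝ)^(2/t) := by
        rw [← Real.rpow_add hp0]
        congr 1
        rw [hσdef]
        ring
      have hpY : (p:ℝ) ≤ Real.exp t := by
        calc (p:ℝ) ≤ (Y:ℝ) := by exact_mod_cast (by omega : p ≤ Y)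
        _ ≤ Real.exp t := hYet
      have hpow : (p:ℝ)^(2/t) ≤ (Real.exp t)^(2/t:ℝ) :=
        Real.rpow_le_rpow hp0.le hpY (by positivity)
      have hexp : (Real.exp t)^(2/t:ℝ) = Real.exp 2 := by
        rw [Real.rpow_def_of_pos (Real.exp_pos _), Real.log_exp]
        congr 1
        field_simp
      have he2 : Real.exp 2 ≤ 8 := by
        have h1 := Real.exp_one_lt_d9
        have h2 : Real.exp 2 = Real.exp 1 * Real.exp 1 := by
          rw [← Real.exp_add]; norm_num
        nlinarith [Real.exp_pos 1]
      rw [hsplit, Real.rpow_neg_one]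
      calc (p:ℝ)⁻¹ * (p:ℝ)^(2/t) ≤ (p:ℝ)⁻¹ * 8 := by
            apply mul_le_mul_of_nonneg_left _ (by positivity)
            calc (p:ℝ)^(2/t) ≤ (Real.exp t)^(2/t:ℝ) := hpow
            _ = Real.exp 2 := hexp
            _ ≤ 8 := he2
      _ = 8 * (1/(p:ℝ)) := by ring
    have hsum : ∑ p ∈ (Y+1).primesBelow, (p:ℝ)^(-σ)
        ≤ 8 * ∑ p ∈ (Y+1).primesBelow, (1:ℝ)/p := by
      rw [Finset.mul_sum]
      apply Finset.sum_le_sum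
      intro p hp
      exact hterm p hp
    have hmert := mertens Y hY2
    have hloglogY : Real.log (Real.log Y) ≤ Real.log t := by
      apply Real.log_le_log
      · calc (0:ℝ) < Real.log 2 := Real.log_pos (by norm_num)
        _ ≤ Real.log Y := Real.log_le_log (by norm_num) (by exact_mod_cast hY2)
      · calc Real.log Y ≤ Real.log (Real.exp t) :=
            Real.log_le_log (by exact_mod_cast (by omega : 0 < Y)) hYet
        _ = t := Real.log_exp t
    have hsum2 : 4 * ∑ p ∈ (Y+1).primesBelow, (p:ℝ)^(-σ) ≤ 288 + 128 * Real.log t := by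
      have : ∑ p ∈ (Y+1).primesBelow, (p:ℝ)^(-σ) ≤ 8 * (9 + 4 * Real.log t) := by
        calc ∑ p ∈ (Y+1).primesBelow, (p:ℝ)^(-σ)
            ≤ 8 * ∑ p ∈ (Y+1).primesBelow, (1:ℝ)/p := hsum
          _ ≤ 8 * (9 + 4 * Real.log (Real.log Y)) := by linarith
          _ ≤ 8 * (9 + 4 * Real.log t) := by linarith
      linarith
    have hxσ : x ^ σ = Real.exp (t^2 - 2*t) := by
      rw [Real.rpow_def_of_pos hxpos]
      congr 1
      rw [← ht2, hσdef]
      field_simp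
    have hxet : x * Real.exp (-t) = Real.exp (t^2 - t) := by
      rw [← Real.exp_log hxpos, ← ht2, ← Real.exp_add, sub_eq_add_neg]
    have hlogt : Real.log t ≤ 2 * Real.sqrt t - 2 := by
      set s := Real.sqrt t with hsdef
      have hs0 : 0 < s := Real.sqrt_pos.mpr ht0
      have hs2 : s^2 = t := Real.sq_sqrt ht0.le
      have h1 : Real.log s ≤ s - 1 := Real.log_le_sub_one_of_pos hs0
      have h2 : Real.log t = 2 * Real.log s := by
        rw [← hs2, Real.log_pow]
        push_cast
        ring
      linarith
    have hst : (1000:ℝ) ≤ Real.sqrt t := by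
      have h1 : (1000:ℝ) = Real.sqrt (10^6) := by
        rw [show ((10:ℝ)^6) = (1000:ℝ)^2 by norm_num, Real.sqrt_sq (by norm_num)]
      rw [h1]
      exact Real.sqrt_le_sqrt ht
    have hkey : 288 + 128 * Real.log t ≤ t := by
      set s := Real.sqrt t with hsdef
      have hs2 : s^2 = t := Real.sq_sqrt ht0.le
      nlinarith
    calc (F₁.card : ℝ)
        ≤ x ^ σ * ∏ p ∈ (Y+1).primesBelow, (1 - (p:ℝ)^(-σ))⁻¹ := hrankin
      _ ≤ x ^ σ * Real.exp (4 * ∑ p ∈ (Y+1).primesBelow, (p:ℝ)^(-σ)) := by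
          apply mul_le_mul_of_nonneg_left hprod (by positivity)
      _ ≤ x ^ σ * Real.exp (288 + 128 * Real.log t) := by
          apply mul_le_mul_of_nonneg_left (Real.exp_le_exp.mpr hsum2) (by positivity)
      _ = Real.exp (t^2 - 2*t + (288 + 128 * Real.log t)) := by
          rw [hxσ, ← Real.exp_add]
      _ ≤ Real.exp (t^2 - t) := by
          apply Real.exp_le_exp.mpr
          linarith
      _ = x * Real.exp (-t) := hxet.symm
  calc (F.card : ℝ) ≤ (F₁.card : ℝ) + (F₂.card : ℝ) := hcardsplit
    _ ≤ x * Real.exp (-t) + 2 * x * Real.exp (-t) := by linarith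
    _ = 3 * x * Real.exp (-t) := by ring
end
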